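/- If a segment of a Morton curve is fully contained in the level-1 subtrees enumerated by the interval I^{d'}_k = [k·2^{d'}, (k+1)·2^{d'}), and it contains the first or the last level-L quadrant in this range of subtrees, then it is face-connected. Precisely: let L ≥ 1, 0 ≤ d' ≤ d, 0 ≤ k < 2^{d−d'}, and let a ≤ b be such that k·2^{d'}·2^{d(L−1)} ≤ a ≤ b < (k+1)·2^{d'}·2^{d(L−1)}; if a = k·2^{d'}·2^{d(L−1)} or b = (k+1)·2^{d'}·2^{d(L−1)} − 1, then the set of level-L quadrants {Q : a ≤ Q ≤ b} is face-connected. -/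

import Mathlib

/-- The `r`-th coordinate (1 ≤ r ≤ d) of a level-`L` quadrant `Q` in dimension `d`. -/
def mortonCoord (d L r Q : ℕ) : ℕ :=
  ∑ ℓ ∈ Finset.range L, (Q / 2 ^ (ℓ * d + (r - 1)) % 2) * 2 ^ ℓ

/-- Two level-`L` quadrants are face-neighbors: they differ by exactly one in exactly
one coordinate and agree in all other coordinates. -/
def MortonFaceNbr (d L Q Q' : ℕ) : Prop :=
  Q ≠ Q' ∧ ∃ r, 1 ≤ r ∧ r ≤ d ∧
    ((mortonCoord d L r Q : ℤ) - (mortonCoord d L r Q' : ℤ)).natAbs = 1 ∧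
    ∀ s, 1 ≤ s → s ≤ d → s ≠ r → mortonCoord d L s Q = mortonCoord d L s Q'

/-- A set of level-`L` quadrants is face-connected: the graph on `S` whose edges join
face-neighbors is connected. -/
def MortonFaceConnected (d L : ℕ) (S : Set ℕ) : Prop :=
  ∀ Q ∈ S, ∀ Q' ∈ S,
    Relation.ReflTransGen (fun a b => a ∈ S ∧ b ∈ S ∧ MortonFaceNbr d L a b) Q Q'

/-- `S` has at most `n` face-connected components: it can be written as a union of `n`
face-connected subsets. -/
def MortonCompBound (d L : ℕ) (S : Set ℕ) (n : ℕ) : Prop :=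
  ∃ f : Fin n → Set ℕ, S = ⋃ i, f i ∧ ∀ i, MortonFaceConnected d L (f i)


open Finset

/-- geometric sum of powers of two, subtraction-free form -/
lemma geom_two_succ (n : ℕ) : (∑ t ∈ Finset.range n, 2^t) + 1 = 2^n := by
  induction n with
  | zero => simp
  | succ n ih => rw [Finset.sum_range_succ, pow_succ]; omega

lemma sum_two_pow_lt {S : Finset ℕ} {n : ℕ} (h : ∀ m ∈ S, m < n) :
    ∑ m ∈ S, 2^m < 2^n := by
  have hsub : S ⊆ Finset.range n := fun m hm => Finset.mem_range.mpr (h m hm)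
  have h1 := Finset.sum_le_sum_of_subset (f := fun m => 2^m) hsub
  have h2 := geom_two_succ n
  calc ∑ m ∈ S, 2^m ≤ ∑ m ∈ Finset.range n, 2^m := h1
    _ < 2^n := by omega

lemma testBit_sum_two_pow (S : Finset ℕ) (m : ℕ) :
    (∑ n ∈ S, 2^n).testBit m = true ↔ m ∈ S := by
  induction S using Finset.strongInduction with
  | _ S ih =>
    rcases S.eq_empty_or_nonempty with rfl | hne
    · simp [Nat.zero_testBit]
    · set M := S.max' hne with hM
      have hMmem : M ∈ S := S.max'_mem hne
      have hSplit : S = insert M (S.erase M) := (Finset.insert_erase hMmem).symm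
      have herase_lt : ∀ x ∈ S.erase M, x < M := by
        intro x hx
        have hxS := Finset.mem_of_mem_erase hx
        have hxne := Finset.ne_of_mem_erase hx
        exact lt_of_le_of_ne (S.le_max' x hxS) hxne
      have hrest : (∑ n ∈ S.erase M, 2^n) < 2^M := sum_two_pow_lt herase_lt
      have hsum : ∑ n ∈ S, 2^n = 2^M * 1 + ∑ n ∈ S.erase M, 2^n := by
        nth_rewrite 1 [hSplit]
        rw [Finset.sum_insert (Finset.notMem_erase M S)]; ring
      rw [hsum, Nat.testBit_two_pow_mul_add 1 hrest m]
      split_ifs with hlt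
      · rw [ih (S.erase M) (Finset.erase_ssubset hMmem)]
        constructor
        · intro hx; exact Finset.mem_of_mem_erase hx
        · intro hx; exact Finset.mem_erase.mpr ⟨by omega, hx⟩
      · rcases eq_or_ne m M with rfl | hne'
        · simp [hMmem]
        · have hmM : M < m := by omega
          have h1 : Nat.testBit 1 (m - M) = false := by
            have : (0:ℕ) ≠ m - M := by omega
            have h2 := Nat.testBit_two_pow_of_ne this
            rwa [pow_zero] at h2
          rw [h1]
          constructor
          · intro h; exact absurd h (by simp)
          · intro hmem; exact absurd (S.le_max' m hmem) (by omega)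

lemma mortonCoord_testBit (d L s Q : ℕ) :
    mortonCoord d L s Q = ∑ t ∈ Finset.range L, (Q.testBit (t*d + (s-1))).toNat * 2^t := by
  unfold mortonCoord
  refine Finset.sum_congr rfl fun t _ => ?_
  rw [Nat.toNat_testBit]

lemma coord_eq_of_bits (d L s i : ℕ) (hs : s - 1 < d) (Q Q' : ℕ)
    (hhigh : ∀ n, i < n → Q.testBit n = Q'.testBit n)
    (hlow : ∀ n, n ≤ i → n % d = s - 1 → Q.testBit n = Q'.testBit n) :
    mortonCoord d L s Q = mortonCoord d L s Q' := by
  rw [mortonCoord_testBit, mortonCoord_testBit]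
  refine Finset.sum_congr rfl fun t _ => ?_
  congr 1
  rcases le_or_gt (t*d + (s-1)) i with h | h
  · refine congrArg _ (hlow _ h ?_)
    rw [mul_comm, Nat.mul_add_mod, Nat.mod_eq_of_lt hs]
  · exact congrArg _ (hhigh _ h)

lemma coord_diff_one (d L r ℓ : ℕ) (hℓ : ℓ < L) (Q Q' : ℕ)
    (h_lt : ∀ t, t < ℓ → Q.testBit (t*d+(r-1)) = false ∧ Q'.testBit (t*d+(r-1)) = true)
    (h_mid : Q.testBit (ℓ*d+(r-1)) = true ∧ Q'.testBit (ℓ*d+(r-1)) = false)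
    (h_gt : ∀ t, ℓ < t → Q.testBit (t*d+(r-1)) = Q'.testBit (t*d+(r-1))) :
    mortonCoord d L r Q = mortonCoord d L r Q' + 1 := by
  rw [mortonCoord_testBit, mortonCoord_testBit]
  have hsplit : ∀ x : ℕ, (∀ f : ℕ → ℕ,
      ∑ t ∈ Finset.range L, f t = (∑ t ∈ Finset.range (ℓ+1), f t) + ∑ t ∈ Finset.Ico (ℓ+1) L, f t) := by
    intro x f
    exact (Finset.sum_range_add_sum_Ico f (by omega)).symm
  rw [hsplit 0, hsplit 0]
  have hT : ∑ t ∈ Finset.Ico (ℓ+1) L, (Q.testBit (t*d+(r-1))).toNat * 2^t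
      = ∑ t ∈ Finset.Ico (ℓ+1) L, (Q'.testBit (t*d+(r-1))).toNat * 2^t := by
    refine Finset.sum_congr rfl fun t ht => ?_
    have := h_gt t (by simp at ht; omega)
    rw [this]
  have hQ1 : ∑ t ∈ Finset.range (ℓ+1), (Q.testBit (t*d+(r-1))).toNat * 2^t = 2^ℓ := by
    rw [Finset.sum_range_succ, h_mid.1]
    have : ∑ t ∈ Finset.range ℓ, (Q.testBit (t*d+(r-1))).toNat * 2^t = 0 := by
      refine Finset.sum_eq_zero fun t ht => ?_
      rw [(h_lt t (Finset.mem_range.mp ht)).1]; simp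
    rw [this]; simp
  have hQ2 : (∑ t ∈ Finset.range (ℓ+1), (Q'.testBit (t*d+(r-1))).toNat * 2^t) + 1 = 2^ℓ := by
    rw [Finset.sum_range_succ, h_mid.2]
    have : ∑ t ∈ Finset.range ℓ, (Q'.testBit (t*d+(r-1))).toNat * 2^t
        = ∑ t ∈ Finset.range ℓ, 2^t := by
      refine Finset.sum_congr rfl fun t ht => ?_
      rw [(h_lt t (Finset.mem_range.mp ht)).2]; simp
    rw [this]
    have := geom_two_succ ℓ
    simp; omega
  omega

lemma exists_lowbit : ∀ q : ℕ, 0 < q → ∃ i, q % 2^(i+1) = 2^i := by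
  intro q
  induction q using Nat.strong_induction_on with
  | _ q ih =>
    intro hq
    rcases Nat.even_or_odd q with he | ho
    · obtain ⟨c, hc⟩ := he
      have hc2 : q = 2 * c := by omega
      have hc0 : 0 < c := by omega
      obtain ⟨i, hi⟩ := ih c (by omega) hc0
      refine ⟨i+1, ?_⟩
      have h2 : 2^(i+1+1) = 2 * 2^(i+1) := by ring
      rw [hc2, h2, Nat.mul_mod_mul_left, hi]
      ring
    · exact ⟨0, by rw [Nat.odd_iff] at ho; simpa using ho⟩

lemma testBit_sum_two_pow_true {S : Finset ℕ} {m : ℕ} (h : m ∈ S) :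
    (∑ n ∈ S, 2^n).testBit m = true := (testBit_sum_two_pow S m).mpr h

lemma testBit_sum_two_pow_false {S : Finset ℕ} {m : ℕ} (h : m ∉ S) :
    (∑ n ∈ S, 2^n).testBit m = false := by
  rcases Bool.eq_false_or_eq_true ((∑ n ∈ S, 2^n).testBit m) with h' | h'
  · exact absurd ((testBit_sum_two_pow S m).mp h') h
  · exact h'

lemma split_ld (d L i : ℕ) (hd : 1 ≤ d) (hiL : i < d * L) :
    ∃ ℓ rm, rm = i % d ∧ rm < d ∧ ℓ * d + rm = i ∧ ℓ < L := by
  refine ⟨i / d, i % d, rfl, Nat.mod_lt _ (by omega), ?_, ?_⟩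
  · rw [mul_comm]; exact Nat.div_add_mod i d
  · have h5 := Nat.div_add_mod i d
    exact Nat.lt_of_mul_lt_mul_left (a := d) (by omega)

lemma left_step (d L N k Q : ℕ) (hd : 1 ≤ d) (hN : N ≤ d * L)
    (h1 : k * 2^N < Q) (h2 : Q < (k+1) * 2^N) :
    ∃ Q', MortonFaceNbr d L Q Q' ∧ k * 2^N ≤ Q' ∧ Q' < Q := by
  have hexp : (k+1) * 2^N = k * 2^N + 2^N := by ring
  set q := Q - k * 2^N with hqdef
  have hQq : Q = k * 2^N + q := by omega
  have hq0 : 0 < q := by omega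
  have hqN : q < 2^N := by omega
  obtain ⟨i, hi⟩ := exists_lowbit q hq0
  have h2i_le : 2^i ≤ q := by have := Nat.mod_le q (2^(i+1)); omega
  have hiN : i < N := by
    have : (2:ℕ)^i < 2^N := by omega
    exact (Nat.pow_lt_pow_iff_right (by norm_num)).mp this
  have hiL : i < d * L := by omega
  have h2i1 : (2:ℕ)^(i+1) = 2^i + 2^i := by rw [pow_succ]; ring
  have hdvd : (2:ℕ)^(i+1) ∣ k * 2^N := Dvd.dvd.mul_left (pow_dvd_pow 2 (by omega)) k
  obtain ⟨c, hc⟩ := hdvd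
  have hQmod : Q % 2^(i+1) = 2^i := by
    rw [hQq, hc, Nat.mul_add_mod, hi]
  obtain ⟨H, hQrep⟩ : ∃ H, Q = 2^(i+1) * H + 2^i :=
    ⟨Q / 2^(i+1), by have := Nat.div_add_mod Q (2^(i+1)); omega⟩
  obtain ⟨ℓ, rm, hrm, hrmd, hℓi, hℓL⟩ := split_ld d L i hd hiL
  set A : Finset ℕ := (Finset.range i).filter (fun n => n % d = rm) with hA
  set low : ℕ := ∑ n ∈ A, 2^n with hlowdef
  have hlow_lt : low < 2^i := by
    apply sum_two_pow_lt
    intro m hm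
    exact Finset.mem_range.mp (Finset.mem_of_mem_filter m hm)
  set Q' := 2^(i+1) * H + low with hQ'
  have tbQ : ∀ n, Q.testBit n
      = if n < i+1 then ((2:ℕ)^i).testBit n else H.testBit (n - (i+1)) := by
    intro n
    conv_lhs => rw [hQrep]
    exact Nat.testBit_two_pow_mul_add H (by omega) n
  have tbQ' : ∀ n, Q'.testBit n
      = if n < i+1 then low.testBit n else H.testBit (n - (i+1)) := by
    intro n
    conv_lhs => rw [hQ']
    exact Nat.testBit_two_pow_mul_add H (by omega) n
  have hcoords : ∀ s, 1 ≤ s → s ≤ d → s ≠ rm + 1 →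
      mortonCoord d L s Q = mortonCoord d L s Q' := by
    intro s hs1 hsd hsr
    apply coord_eq_of_bits d L s i (by omega)
    · intro n hn
      rw [tbQ n, tbQ' n, if_neg (by omega), if_neg (by omega)]
    · intro n hni hnmod
      rw [tbQ n, tbQ' n, if_pos (by omega), if_pos (by omega)]
      have hnei : i ≠ n := by
        intro h; rw [← h] at hnmod; omega
      rw [Nat.testBit_two_pow_of_ne hnei, testBit_sum_two_pow_false]
      intro hmem
      rw [hA, Finset.mem_filter] at hmem
      omega
  have hcr : mortonCoord d L (rm+1) Q = mortonCoord d L (rm+1) Q' + 1 := by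
    apply coord_diff_one d L (rm+1) ℓ hℓL
    · intro t ht
      simp only [Nat.add_sub_cancel]
      have hlt : t*d + rm < i := by
        have h3 : t*d + d ≤ ℓ*d := by
          calc t*d + d = (t+1)*d := by ring
          _ ≤ ℓ*d := Nat.mul_le_mul_right d (by omega)
        omega
      constructor
      · rw [tbQ _, if_pos (by omega)]
        exact Nat.testBit_two_pow_of_ne (by omega)
      · rw [tbQ' _, if_pos (by omega)]
        apply testBit_sum_two_pow_true
        rw [hA, Finset.mem_filter]
        refine ⟨Finset.mem_range.mpr hlt, ?_⟩
        simp only [mul_comm t d, Nat.mul_add_mod]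
        exact Nat.mod_eq_of_lt hrmd
    · simp only [Nat.add_sub_cancel]
      have hpos : ℓ*d + rm = i := hℓi
      constructor
      · rw [tbQ _, if_pos (by omega), hpos]; exact Nat.testBit_two_pow_self
      · rw [tbQ' _, if_pos (by omega), hpos]
        apply testBit_sum_two_pow_false
        rw [hA, Finset.mem_filter]
        simp
    · intro t ht
      simp only [Nat.add_sub_cancel]
      have hgt : i + 1 ≤ t*d + rm := by
        have h3 : ℓ*d + d ≤ t*d := by
          calc ℓ*d + d = (ℓ+1)*d := by ring
          _ ≤ t*d := Nat.mul_le_mul_right d (by omega)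
        omega
      rw [tbQ _, tbQ' _, if_neg (by omega), if_neg (by omega)]
  have heq : Q' + 2^i = Q + low := by omega
  refine ⟨Q', ⟨by omega, rm+1, by omega, by omega, ?_, hcoords⟩, by omega, by omega⟩
  have hone : (mortonCoord d L (rm+1) Q : ℤ) - (mortonCoord d L (rm+1) Q' : ℤ) = 1 := by
    rw [hcr]; push_cast; ring
  rw [hone]; rfl

lemma right_step (d L N k Q : ℕ) (hd : 1 ≤ d) (hN : N ≤ d * L)
    (h1 : k * 2^N ≤ Q) (h2 : Q + 1 < (k+1) * 2^N) :
    ∃ Q', MortonFaceNbr d L Q Q' ∧ Q < Q' ∧ Q' < (k+1) * 2^N := by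
  have hexp : (k+1) * 2^N = k * 2^N + 2^N := by ring
  set q := Q - k * 2^N with hqdef
  have hQq : Q = k * 2^N + q := by omega
  have hqN : q + 1 < 2^N := by omega
  obtain ⟨i, hi⟩ := exists_lowbit (q+1) (by omega)
  have h2i_le : 2^i ≤ q + 1 := by have := Nat.mod_le (q+1) (2^(i+1)); omega
  have hiN : i < N := by
    have : (2:ℕ)^i < 2^N := by omega
    exact (Nat.pow_lt_pow_iff_right (by norm_num)).mp this
  have hiL : i < d * L := by omega
  have h2i1 : (2:ℕ)^(i+1) = 2^i + 2^i := by rw [pow_succ]; ring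
  have h2ipos : (0:ℕ) < 2^i := Nat.pow_pos (by norm_num)
  obtain ⟨c, hc⟩ : ∃ c, q + 1 = 2^(i+1) * c + 2^i :=
    ⟨(q+1) / 2^(i+1), by have := Nat.div_add_mod (q+1) (2^(i+1)); omega⟩
  have hqrep : q = 2^(i+1) * c + (2^i - 1) := by omega
  have hqmod : q % 2^(i+1) = 2^i - 1 := by
    conv_lhs => rw [hqrep]
    rw [Nat.mul_add_mod]
    exact Nat.mod_eq_of_lt (by omega)
  have hdvd : (2:ℕ)^(i+1) ∣ k * 2^N := Dvd.dvd.mul_left (pow_dvd_pow 2 (by omega)) k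
  obtain ⟨c2, hc2⟩ := hdvd
  have hQmod : Q % 2^(i+1) = 2^i - 1 := by
    rw [hQq, hc2, Nat.mul_add_mod, hqmod]
  obtain ⟨H, hQrep⟩ : ∃ H, Q = 2^(i+1) * H + (2^i - 1) :=
    ⟨Q / 2^(i+1), by have := Nat.div_add_mod Q (2^(i+1)); omega⟩
  obtain ⟨ℓ, rm, hrm, hrmd, hℓi, hℓL⟩ := split_ld d L i hd hiL
  have hlowQsum : ∑ n ∈ Finset.range i, 2^n = 2^i - 1 := by
    have := geom_two_succ i; omega
  set C : Finset ℕ := (Finset.range (i+1)).filter (fun n => n = i ∨ ¬ n % d = rm) with hC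
  set lowC : ℕ := ∑ n ∈ C, 2^n with hlowCdef
  have hlowC_lt : lowC < 2^(i+1) := by
    apply sum_two_pow_lt
    intro m hm
    exact Finset.mem_range.mp (Finset.mem_of_mem_filter m hm)
  have hiC : i ∈ C := by
    rw [hC, Finset.mem_filter]
    exact ⟨Finset.mem_range.mpr (by omega), Or.inl rfl⟩
  have hlowC_ge : 2^i ≤ lowC := by
    rw [hlowCdef]
    exact Finset.single_le_sum (f := fun n => 2^n) (fun n _ => Nat.zero_le _) hiC
  set Q' := 2^(i+1) * H + lowC with hQ'
  have tbQ : ∀ n, Q.testBit n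
      = if n < i+1 then (∑ m ∈ Finset.range i, 2^m).testBit n else H.testBit (n - (i+1)) := by
    intro n
    conv_lhs => rw [hQrep, ← hlowQsum]
    exact Nat.testBit_two_pow_mul_add H (by rw [hlowQsum]; omega) n
  have tbQ' : ∀ n, Q'.testBit n
      = if n < i+1 then lowC.testBit n else H.testBit (n - (i+1)) := by
    intro n
    conv_lhs => rw [hQ']
    exact Nat.testBit_two_pow_mul_add H hlowC_lt n
  have hcoords : ∀ s, 1 ≤ s → s ≤ d → s ≠ rm + 1 →
      mortonCoord d L s Q = mortonCoord d L s Q' := by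
    intro s hs1 hsd hsr
    apply coord_eq_of_bits d L s i (by omega)
    · intro n hn
      rw [tbQ n, tbQ' n, if_neg (by omega), if_neg (by omega)]
    · intro n hni hnmod
      rw [tbQ n, tbQ' n, if_pos (by omega), if_pos (by omega)]
      have hnei : n ≠ i := by
        intro h; rw [h] at hnmod; omega
      have hni' : n < i := by omega
      rw [testBit_sum_two_pow_true (Finset.mem_range.mpr hni'), testBit_sum_two_pow_true]
      rw [hC, Finset.mem_filter]
      refine ⟨Finset.mem_range.mpr (by omega), Or.inr (by omega)⟩
  have hcr : mortonCoord d L (rm+1) Q' = mortonCoord d L (rm+1) Q + 1 := by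
    apply coord_diff_one d L (rm+1) ℓ hℓL
    · intro t ht
      simp only [Nat.add_sub_cancel]
      have hlt : t*d + rm < i := by
        have h3 : t*d + d ≤ ℓ*d := by
          calc t*d + d = (t+1)*d := by ring
          _ ≤ ℓ*d := Nat.mul_le_mul_right d (by omega)
        omega
      have hmod : (t*d + rm) % d = rm := by
        simp only [mul_comm t d, Nat.mul_add_mod]
        exact Nat.mod_eq_of_lt hrmd
      constructor
      · rw [tbQ' _, if_pos (by omega)]
        apply testBit_sum_two_pow_false
        rw [hC, Finset.mem_filter]
        intro hmem
        rcases hmem.2 with h' | h'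
        · omega
        · exact h' hmod
      · rw [tbQ _, if_pos (by omega)]
        exact testBit_sum_two_pow_true (Finset.mem_range.mpr hlt)
    · simp only [Nat.add_sub_cancel]
      constructor
      · rw [tbQ' _, if_pos (by omega), hℓi]
        exact testBit_sum_two_pow_true hiC
      · rw [tbQ _, if_pos (by omega), hℓi]
        exact testBit_sum_two_pow_false (by simp)
    · intro t ht
      simp only [Nat.add_sub_cancel]
      have hgt : i + 1 ≤ t*d + rm := by
        have h3 : ℓ*d + d ≤ t*d := by
          calc ℓ*d + d = (ℓ+1)*d := by ring
          _ ≤ t*d := Nat.mul_le_mul_right d (by omega)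
        omega
      rw [tbQ _, tbQ' _, if_neg (by omega), if_neg (by omega)]
  -- bounds
  have heq : Q' + (2^i - 1) = Q + lowC := by omega
  have hPM : (2:ℕ)^(i+1) * 2^(N-i-1) = 2^N := by
    rw [← pow_add]; congr 1; omega
  have hPc : 2^(i+1) * c ≤ q := by omega
  have hcM : c < 2^(N-i-1) := by
    by_contra hcon
    push_neg at hcon
    have := Nat.mul_le_mul_left (2^(i+1)) hcon
    omega
  have hPc1 : 2^(i+1) * (c+1) ≤ 2^(i+1) * 2^(N-i-1) :=
    Nat.mul_le_mul_left _ (by omega)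
  have hmul : 2^(i+1) * (c+1) = 2^(i+1) * c + 2^(i+1) := by ring
  refine ⟨Q', ⟨by omega, rm+1, by omega, by omega, ?_, hcoords⟩, by omega, by omega⟩
  have hone : (mortonCoord d L (rm+1) Q : ℤ) - (mortonCoord d L (rm+1) Q' : ℤ) = -1 := by
    rw [hcr]; push_cast; ring
  rw [hone]; rfl

/-- If a segment of the Morton curve is fully contained in the level-1 subtrees
enumerated by `I^{d'}_k = [k·2^{d'}, (k+1)·2^{d'})` and contains the first or the last
level-`L` quadrant of this range, then it is face-connected. -/
theorem morton_one_sided_segment_connected (d L d' k a b : ℕ) (hd : 1 ≤ d)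
    (hL : 1 ≤ L) (hd' : d' ≤ d) (hk : k < 2 ^ (d - d'))
    (ha : k * 2 ^ d' * 2 ^ (d * (L - 1)) ≤ a) (hab : a ≤ b)
    (hb : b < (k + 1) * 2 ^ d' * 2 ^ (d * (L - 1)))
    (hside : a = k * 2 ^ d' * 2 ^ (d * (L - 1)) ∨
      b = (k + 1) * 2 ^ d' * 2 ^ (d * (L - 1)) - 1) :
    MortonFaceConnected d L (Set.Icc a b) := by
  obtain ⟨L0, rfl⟩ : ∃ L0, L = L0 + 1 := ⟨L - 1, by omega⟩
  simp only [Nat.add_sub_cancel] at ha hb hside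
  have hmeq : ∀ j : ℕ, j * 2 ^ d' * 2 ^ (d * L0) = j * 2 ^ (d' + d * L0) := by
    intro j; rw [mul_assoc, ← pow_add]
  rw [hmeq k] at ha
  rw [hmeq (k+1)] at hb
  rw [hmeq k, hmeq (k+1)] at hside
  set N := d' + d * L0 with hN
  have hNle : N ≤ d * (L0 + 1) := by
    have h0 : d * (L0 + 1) = d * L0 + d := by ring
    omega
  have hRsymm : Symmetric (fun x y =>
      x ∈ Set.Icc a b ∧ y ∈ Set.Icc a b ∧ MortonFaceNbr d (L0+1) x y) := by
    intro x y hxy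
    obtain ⟨hx, hy, hne, r, h1, h2, h3, h4⟩ := hxy
    exact ⟨hy, hx, fun h => hne h.symm, r, h1, h2, by omega,
      fun s u v w => (h4 s u v w).symm⟩
  rcases hside with hA | hB
  · subst hA
    have key : ∀ Q, Q ∈ Set.Icc (k * 2^N) b →
        Relation.ReflTransGen (fun x y => x ∈ Set.Icc (k * 2^N) b ∧
          y ∈ Set.Icc (k * 2^N) b ∧ MortonFaceNbr d (L0+1) x y) Q (k * 2^N) := by
      intro Q
      induction Q using Nat.strong_induction_on with
      | _ Q ih =>
        intro hQ
        obtain ⟨hQ1, hQ2⟩ := Set.mem_Icc.mp hQ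
        rcases eq_or_lt_of_le hQ1 with heq | hlt
        · rw [← heq]
        · have hQlt : Q < (k+1) * 2^N := lt_of_le_of_lt hQ2 hb
          obtain ⟨Q'', hnbr, hge, hlt'⟩ := left_step d (L0+1) N k Q hd hNle hlt hQlt
          have hQ''mem : Q'' ∈ Set.Icc (k * 2^N) b :=
            Set.mem_Icc.mpr ⟨hge, le_trans (le_of_lt hlt') hQ2⟩
          exact Relation.ReflTransGen.head ⟨hQ, hQ''mem, hnbr⟩ (ih Q'' hlt' hQ''mem)
    intro Q hQ Q' hQ'
    exact (key Q hQ).trans ((@Std.Symm.symm _ _ (@Relation.ReflTransGen.symmetric _ _ ⟨fun x y h => hRsymm h⟩) _ _) (key Q' hQ'))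
  · have hbpos : 0 < (k+1) * 2^N := by positivity
    have hb1 : b + 1 = (k+1) * 2^N := by omega
    have key : ∀ n Q, Q ∈ Set.Icc a b → b - Q ≤ n →
        Relation.ReflTransGen (fun x y => x ∈ Set.Icc a b ∧
          y ∈ Set.Icc a b ∧ MortonFaceNbr d (L0+1) x y) Q b := by
      intro n
      induction n with
      | zero =>
        intro Q hQ hle
        obtain ⟨hQ1, hQ2⟩ := Set.mem_Icc.mp hQ
        have hQb : Q = b := by omega
        rw [hQb]
      | succ n ihn =>
        intro Q hQ hle
        obtain ⟨hQ1, hQ2⟩ := Set.mem_Icc.mp hQ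
        rcases eq_or_lt_of_le hQ2 with heq | hlt
        · rw [heq]
        · obtain ⟨Q'', hnbr, hgt, hlt'⟩ := right_step d (L0+1) N k Q hd hNle
            (le_trans ha hQ1) (by omega)
          have hQ''mem : Q'' ∈ Set.Icc a b :=
            Set.mem_Icc.mpr ⟨le_trans hQ1 (le_of_lt hgt), by omega⟩
          exact Relation.ReflTransGen.head ⟨hQ, hQ''mem, hnbr⟩
            (ihn Q'' hQ''mem (by omega))
    intro Q hQ Q' hQ'
    exact (key (b - Q) Q hQ le_rfl).trans
      ((@Std.Symm.symm _ _ (@Relation.ReflTransGen.symmetric _ _ ⟨fun x y h => hRsymm h⟩) _ _) (key (b - Q') Q' hQ' le_rfl))
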